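/- arXiv:1812.09343 — 5 statements merged into one kernel-verified Lean document; each statement's English description precedes it below -/
import Mathlib

section
/- The function f : (0,∞) → ℝ defined by f(z) = exp(-arctan(z)/z) / sqrt(1 + z²) is monotonically decreasing, and consequently f(z) ≤ exp(-1) for all z > 0. -/
open Real Set

private lemma my_arctan_le_self {x : ℝ} (hx : 0 ≤ x) : Real.arctan x ≤ x := by
  have key : MonotoneOn (fun x : ℝ => x - Real.arctan x) (Ici 0) := by
    apply monotoneOn_of_deriv_nonneg (convex_Ici 0)
    · exact (continuous_id.sub Real.continuous_arctan).continuousOn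
    · intro y hy
      exact (differentiable_id.sub Real.differentiable_arctan).differentiableAt.differentiableWithinAt
    · intro y hy
      have hd : HasDerivAt (fun x : ℝ => x - Real.arctan x) (1 - 1 / (1 + y ^ 2)) y :=
        (hasDerivAt_id y).sub (Real.hasDerivAt_arctan y)
      rw [hd.deriv]
      have h1 : (0:ℝ) < 1 + y ^ 2 := by positivity
      have : 1 / (1 + y ^ 2) ≤ 1 := by
        rw [div_le_one h1]; nlinarith
      linarith
  have h0 := key (self_mem_Ici) (mem_Ici.mpr hx) hx
  simpa [Real.arctan_zero] using h0

private lemma aux_h_deriv {z : ℝ} (hz : 0 < z) :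
    HasDerivAt (fun z : ℝ => -Real.arctan z / z - Real.log (1 + z ^ 2) / 2)
      ((Real.arctan z - z) / z ^ 2) z := by
  have h1 : (0:ℝ) < 1 + z ^ 2 := by positivity
  have hsq : HasDerivAt (fun z : ℝ => 1 + z ^ 2) (2 * z) z := by
    simpa using (hasDerivAt_pow 2 z).const_add 1
  have hlog : HasDerivAt (fun z : ℝ => Real.log (1 + z ^ 2)) ((1 + z ^ 2)⁻¹ * (2 * z)) z :=
    by have := (Real.hasDerivAt_log h1.ne').comp z hsq; exact this
  have hdiv : HasDerivAt (fun z : ℝ => -Real.arctan z / z)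
      ((-(1 / (1 + z ^ 2)) * z - -Real.arctan z * 1) / z ^ 2) z :=
    ((Real.hasDerivAt_arctan z).neg).div (hasDerivAt_id z) hz.ne'
  have := hdiv.sub (hlog.div_const 2)
  refine this.congr_deriv ?_
  field_simp
  ring

private lemma aux_h_antitone :
    AntitoneOn (fun z : ℝ => -Real.arctan z / z - Real.log (1 + z ^ 2) / 2) (Ioi 0) := by
  apply antitoneOn_of_deriv_nonpos (convex_Ioi 0)
  · intro z hz
    exact (aux_h_deriv hz).continuousAt.continuousWithinAt
  · intro z hz
    rw [interior_Ioi] at hz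
    exact (aux_h_deriv hz).differentiableAt.differentiableWithinAt
  · intro z hz
    rw [interior_Ioi] at hz
    rw [(aux_h_deriv hz).deriv]
    apply div_nonpos_of_nonpos_of_nonneg
    · linarith [my_arctan_le_self hz.le]
    · positivity

private lemma aux_k_deriv (y : ℝ) :
    HasDerivAt (fun z : ℝ => Real.arctan z + z * Real.log (1 + z ^ 2) / 2 - z)
      (Real.log (1 + y ^ 2) / 2) y := by
  have h1 : (0:ℝ) < 1 + y ^ 2 := by positivity
  have hsq : HasDerivAt (fun z : ℝ => 1 + z ^ 2) (2 * y) y := by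
    simpa using (hasDerivAt_pow 2 y).const_add 1
  have hlog : HasDerivAt (fun z : ℝ => Real.log (1 + z ^ 2)) ((1 + y ^ 2)⁻¹ * (2 * y)) y :=
    by have := (Real.hasDerivAt_log h1.ne').comp y hsq; exact this
  have hk := ((Real.hasDerivAt_arctan y).add
    (((hasDerivAt_id y).mul hlog).div_const 2)).sub (hasDerivAt_id y)
  refine hk.congr_deriv ?_
  simp only [id_eq]
  field_simp
  ring

private lemma aux_h_le {z : ℝ} (hz : 0 < z) :
    -Real.arctan z / z - Real.log (1 + z ^ 2) / 2 ≤ -1 := by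
  have key : MonotoneOn (fun z : ℝ => Real.arctan z + z * Real.log (1 + z ^ 2) / 2 - z)
      (Ici 0) := by
    apply monotoneOn_of_deriv_nonneg (convex_Ici 0)
    · intro y hy
      exact (aux_k_deriv y).continuousAt.continuousWithinAt
    · intro y hy
      exact (aux_k_deriv y).differentiableAt.differentiableWithinAt
    · intro y hy
      rw [(aux_k_deriv y).deriv]
      have : 0 ≤ Real.log (1 + y ^ 2) := Real.log_nonneg (by nlinarith)
      linarith
  have h0 := key (self_mem_Ici) (mem_Ici.mpr hz.le) hz.le
  simp only [Real.arctan_zero, Real.log_one] at h0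
  norm_num at h0
  -- h0 : 0 ≤ arctan z + z * log(1+z²)/2 - z  (some form)
  rw [sub_le_iff_le_add, div_le_iff₀ hz] at *
  nlinarith [h0]

private lemma f_eq_exp_h {z : ℝ} (hz : 0 < z) :
    Real.exp (-(Real.arctan z) / z) / Real.sqrt (1 + z ^ 2) =
      Real.exp (-Real.arctan z / z - Real.log (1 + z ^ 2) / 2) := by
  have h1 : (0:ℝ) < 1 + z ^ 2 := by positivity
  rw [Real.sqrt_eq_rpow, Real.rpow_def_of_pos h1, Real.exp_sub]
  ring_nf

theorem stmt4 :
    AntitoneOn (fun z : ℝ => Real.exp (-(Real.arctan z) / z) / Real.sqrt (1 + z ^ 2))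
      (Set.Ioi 0) ∧
    ∀ z : ℝ, 0 < z →
      Real.exp (-(Real.arctan z) / z) / Real.sqrt (1 + z ^ 2) ≤ Real.exp (-1) := by
  constructor
  · intro x hx y hy hxy
    simp only
    rw [f_eq_exp_h (mem_Ioi.mp hx), f_eq_exp_h (mem_Ioi.mp hy)]
    exact Real.exp_le_exp.mpr (aux_h_antitone hx hy hxy)
  · intro z hz
    rw [f_eq_exp_h hz]
    exact Real.exp_le_exp.mpr (aux_h_le hz)
end

section
/- For a > 0, the function z ↦ (exp(-z) * sin(a z))² on [0,∞) attains its maximum at z = arctan(a)/a, and consequently |exp(-z) sin(a z)| ≤ exp(-arctan(a)/a) * a / sqrt(1 + a²) for all z ≥ 0. -/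
open Real

private lemma stmt5_deriv (a : ℝ) (ha : 0 < a) (t : ℝ) :
    HasDerivAt (fun t => Real.sin t * Real.exp (-t / a))
      (Real.exp (-t / a) * (Real.cos t - Real.sin t / a)) t := by
  have h1 : HasDerivAt (fun t : ℝ => -t / a) (-1 / a) t := by
    simpa using ((hasDerivAt_id t).neg.div_const a)
  have h2 := (Real.hasDerivAt_exp (-t / a)).comp t h1
  have h3 : HasDerivAt (fun t => Real.sin t * Real.exp (-t / a))
      (Real.cos t * Real.exp (-t / a) + Real.sin t * (Real.exp (-t / a) * (-1 / a))) t :=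
    (Real.hasDerivAt_sin t).mul h2
  convert h3 using 1
  ring

private lemma stmt5_hump (a : ℝ) (ha : 0 < a) :
    ∀ t ∈ Set.Icc 0 π,
      Real.sin t * Real.exp (-t / a) ≤
        Real.sin (Real.arctan a) * Real.exp (-(Real.arctan a) / a) := by
  set t₀ := Real.arctan a with ht₀
  have ht₀pos : 0 < t₀ := by rw [ht₀, ← Real.arctan_zero]; exact Real.arctan_strictMono ha
  have ht₀lt : t₀ < π / 2 := Real.arctan_lt_pi_div_two a
  set h : ℝ → ℝ := fun t => Real.sin t * Real.exp (-t / a) with hh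
  have hcont : Continuous h := by
    fun_prop
  have hderiv : ∀ t, deriv h t = Real.exp (-t / a) * (Real.cos t - Real.sin t / a) :=
    fun t => (stmt5_deriv a ha t).deriv
  have hmono : MonotoneOn h (Set.Icc 0 t₀) := by
    apply monotoneOn_of_deriv_nonneg (convex_Icc 0 t₀) hcont.continuousOn
    · exact fun t _ => ((stmt5_deriv a ha t).differentiableAt).differentiableWithinAt
    · intro t ht
      rw [interior_Icc] at ht
      rw [hderiv]
      have hcos : 0 < Real.cos t :=
        Real.cos_pos_of_mem_Ioo ⟨by linarith [ht.1, Real.pi_pos], by linarith [ht.2]⟩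
      have htan : Real.tan t < a := by
        have := Real.tan_lt_tan_of_nonneg_of_lt_pi_div_two (le_of_lt ht.1) ht₀lt ht.2
        rwa [Real.tan_arctan] at this
      have hsin : Real.sin t < a * Real.cos t := by
        have : Real.sin t / Real.cos t < a := by rwa [Real.tan_eq_sin_div_cos] at htan
        calc Real.sin t = Real.sin t / Real.cos t * Real.cos t := by field_simp
          _ < a * Real.cos t := by exact mul_lt_mul_of_pos_right this hcos
      have : Real.sin t / a ≤ Real.cos t := by
        rw [div_le_iff₀ ha]; nlinarith
      have := Real.exp_pos (-t / a)
      nlinarith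
  have hanti : AntitoneOn h (Set.Icc t₀ π) := by
    apply antitoneOn_of_deriv_nonpos (convex_Icc t₀ π) hcont.continuousOn
    · exact fun t _ => ((stmt5_deriv a ha t).differentiableAt).differentiableWithinAt
    · intro t ht
      rw [interior_Icc] at ht
      rw [hderiv]
      have hsinpos : 0 ≤ Real.sin t :=
        Real.sin_nonneg_of_nonneg_of_le_pi (by linarith [ht.1]) (le_of_lt ht.2)
      have hkey : Real.cos t - Real.sin t / a ≤ 0 := by
        rcases le_or_gt (π / 2) t with hc | hc
        · have hcos : Real.cos t ≤ 0 := Real.cos_nonpos_of_pi_div_two_le_of_le hc (by linarith [ht.2, Real.pi_pos])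
          have : 0 ≤ Real.sin t / a := div_nonneg hsinpos ha.le
          linarith
        · have hcos : 0 < Real.cos t :=
            Real.cos_pos_of_mem_Ioo ⟨by linarith [ht.1, Real.pi_pos], hc⟩
          have htan : a < Real.tan t := by
            have := Real.tan_lt_tan_of_lt_of_lt_pi_div_two
              (by linarith : -(π/2) < t₀) hc ht.1
            rwa [Real.tan_arctan] at this
          have : a < Real.sin t / Real.cos t := by rwa [Real.tan_eq_sin_div_cos] at htan
          have hsin : a * Real.cos t < Real.sin t := by
            calc a * Real.cos t < Real.sin t / Real.cos t * Real.cos t :=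
              mul_lt_mul_of_pos_right this hcos
              _ = Real.sin t := by field_simp
          have : Real.cos t ≤ Real.sin t / a := by
            rw [le_div_iff₀ ha]; nlinarith
          linarith
      have := Real.exp_pos (-t / a)
      nlinarith
  intro t ht
  rcases le_total t t₀ with hc | hc
  · exact hmono ⟨ht.1, hc⟩ ⟨ht₀pos.le, le_refl _⟩ hc
  · exact hanti ⟨le_refl _, by linarith [Real.pi_pos]⟩ ⟨hc, ht.2⟩ hc

private lemma stmt5_key (a : ℝ) (ha : 0 < a) :
    ∀ t : ℝ, 0 ≤ t →
      |Real.sin t| * Real.exp (-t / a) ≤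
        Real.sin (Real.arctan a) * Real.exp (-(Real.arctan a) / a) := by
  intro t ht
  set n : ℤ := ⌊t / π⌋ with hn
  set t' : ℝ := t - n * π with ht'
  have hπ := Real.pi_pos
  have h1 : (n : ℝ) * π ≤ t := by
    have := Int.floor_le (t / π)
    calc (n : ℝ) * π ≤ t / π * π := by nlinarith
      _ = t := by field_simp
  have h2 : t < ((n : ℝ) + 1) * π := by
    have := Int.lt_floor_add_one (t / π)
    calc t = t / π * π := by field_simp
      _ < ((n : ℝ) + 1) * π := by nlinarith
  have ht'0 : 0 ≤ t' := by simp [ht']; linarith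
  have ht'π : t' ≤ π := by simp [ht']; nlinarith
  have habs : |Real.sin t| = Real.sin t' := by
    have : Real.sin t = (-1) ^ n * Real.sin t' := by
      rw [← Real.sin_add_int_mul_pi t' n, ht']; ring_nf
    have h9 : |(-1:ℝ)^n| = 1 := by
      rcases Int.even_or_odd n with h | h
      · rw [h.neg_one_zpow]; simp
      · rw [Odd.neg_one_zpow h]; simp
    rw [this, abs_mul, h9, one_mul,
      abs_of_nonneg (Real.sin_nonneg_of_nonneg_of_le_pi ht'0 ht'π)]
  have hexp : Real.exp (-t / a) ≤ Real.exp (-t' / a) := by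
    apply Real.exp_le_exp.2
    have : t' ≤ t := by
      have : (0:ℝ) ≤ (n : ℝ) * π := by
        have : (0:ℤ) ≤ n := Int.floor_nonneg.2 (div_nonneg ht hπ.le)
        positivity
      simp [ht']; linarith
    gcongr
  rw [habs]
  calc Real.sin t' * Real.exp (-t / a) ≤ Real.sin t' * Real.exp (-t' / a) :=
        mul_le_mul_of_nonneg_left hexp (Real.sin_nonneg_of_nonneg_of_le_pi ht'0 ht'π)
    _ ≤ _ := stmt5_hump a ha t' ⟨ht'0, ht'π⟩

theorem stmt5 (a : ℝ) (ha : 0 < a) :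
    IsMaxOn (fun z : ℝ => (Real.exp (-z) * Real.sin (a * z)) ^ 2) (Set.Ici 0)
      (Real.arctan a / a) ∧
    ∀ z : ℝ, 0 ≤ z →
      |Real.exp (-z) * Real.sin (a * z)| ≤
        Real.exp (-(Real.arctan a) / a) * a / Real.sqrt (1 + a ^ 2) := by
  set t₀ := Real.arctan a with ht₀
  have hbound : ∀ z : ℝ, 0 ≤ z →
      |Real.exp (-z) * Real.sin (a * z)| ≤
        Real.exp (-(t₀) / a) * a / Real.sqrt (1 + a ^ 2) := by
    intro z hz
    have := stmt5_key a ha (a * z) (by positivity)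
    rw [abs_mul, abs_of_pos (Real.exp_pos _)]
    have heq : -(a * z) / a = -z := by field_simp
    rw [heq] at this
    have : Real.exp (-z) * |Real.sin (a * z)| ≤
        Real.sin t₀ * Real.exp (-t₀ / a) := by linarith [this]
    calc Real.exp (-z) * |Real.sin (a * z)| ≤ Real.sin t₀ * Real.exp (-t₀ / a) := this
      _ = Real.exp (-t₀ / a) * a / Real.sqrt (1 + a ^ 2) := by
          rw [Real.sin_arctan]; ring
  refine ⟨?_, hbound⟩
  intro z hz
  simp only [Set.mem_Ici] at hz
  have hz₀ : a * (t₀ / a) = t₀ := by field_simp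
  have hval : Real.exp (-(t₀ / a)) * Real.sin (a * (t₀ / a)) =
      Real.exp (-t₀ / a) * a / Real.sqrt (1 + a ^ 2) := by
    rw [hz₀, Real.sin_arctan, neg_div]; ring
  have hb := hbound z hz
  have hbnn : 0 ≤ Real.exp (-t₀ / a) * a / Real.sqrt (1 + a ^ 2) := by positivity
  simp only [Set.mem_setOf_eq]
  calc (Real.exp (-z) * Real.sin (a * z)) ^ 2
      = |Real.exp (-z) * Real.sin (a * z)| ^ 2 := (sq_abs _).symm
    _ ≤ (Real.exp (-t₀ / a) * a / Real.sqrt (1 + a ^ 2)) ^ 2 := by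
        apply pow_le_pow_left₀ (abs_nonneg _) hb
    _ = (Real.exp (-(t₀ / a)) * Real.sin (a * (t₀ / a))) ^ 2 := by rw [hval]
end

section
/- Let b > 0 and λ ∈ (0, b²/4), and set β = sqrt(1 - 4λ/b²). Then for all t ≥ 0: exp(-bt/2) * (cosh(β bt/2) + (1/β) sinh(β bt/2)) ≤ 2 * exp(-λ t / b). -/
set_option maxHeartbeats 1000000

/-- `sinh z ≤ z * exp z` for `z ≥ 0`. -/
lemma sinh_le_mul_exp {z : ℝ} (hz : 0 ≤ z) : Real.sinh z ≤ z * Real.exp z := by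
  rw [Real.sinh_eq]
  have h1 : 1 - 2 * z ≤ Real.exp (-(2 * z)) := by
    have := Real.add_one_le_exp (-(2 * z)); linarith
  have h2 : Real.exp (-z) = Real.exp z * Real.exp (-(2*z)) := by
    rw [← Real.exp_add]; ring_nf
  have h3 : (0:ℝ) < Real.exp z := Real.exp_pos z
  rw [h2]
  nlinarith [Real.exp_pos (-(2*z))]

/-- `sinh z ≤ exp z / 2`. -/
lemma sinh_le_exp_half (z : ℝ) : Real.sinh z ≤ Real.exp z / 2 := by
  rw [Real.sinh_eq]
  have := Real.exp_pos (-z)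
  linarith

/-- `e * x ≤ exp x`. -/
lemma mul_exp_one_le_exp (x : ℝ) : Real.exp 1 * x ≤ Real.exp x := by
  have := Real.add_one_le_exp (x - 1)
  have h : Real.exp (x - 1) = Real.exp x / Real.exp 1 := by
    rw [Real.exp_sub]
  rw [h] at this
  have he : (0:ℝ) < Real.exp 1 := Real.exp_pos 1
  calc Real.exp 1 * x ≤ Real.exp 1 * ((x - 1) + 1) := by linarith
    _ ≤ Real.exp 1 * (Real.exp x / Real.exp 1) := by
        apply mul_le_mul_of_nonneg_left this he.le
    _ = Real.exp x := by field_simp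

lemma key_ineq (β s : ℝ) (hβ0 : 0 < β) (hβ1 : β < 1) (hs : 0 ≤ s) :
    Real.cosh (β * s / 2) + (1 / β) * Real.sinh (β * s / 2)
      ≤ 2 * Real.exp ((1 + β ^ 2) * s / 4) := by
  set z := β * s / 2 with hzdef
  have hz : 0 ≤ z := by positivity
  have hcs : Real.cosh z = Real.exp z - Real.sinh z := by
    have := Real.cosh_add_sinh z; linarith
  have hEz : (1 + β ^ 2) * s / 4 = z + (1 - β) ^ 2 * s / 4 := by
    rw [hzdef]; ring
  have hexpE : Real.exp ((1 + β ^ 2) * s / 4)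
      = Real.exp z * Real.exp ((1 - β) ^ 2 * s / 4) := by
    rw [hEz, Real.exp_add]
  have hEpos : (1:ℝ) ≤ Real.exp ((1 - β) ^ 2 * s / 4) := by
    rw [← Real.exp_zero]
    apply Real.exp_le_exp.mpr
    positivity
  have hez : 0 < Real.exp z := Real.exp_pos z
  have hsinh0 : 0 ≤ Real.sinh z := by
    rw [Real.sinh_eq]
    have : Real.exp (-z) ≤ Real.exp z := Real.exp_le_exp.mpr (by linarith)
    linarith
  rw [hcs, hexpE]
  -- goal: exp z - sinh z + (1/β) * sinh z ≤ 2 * (exp z * exp ((1-β)^2*s/4))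
  have hkey : (1 - β) / β * Real.sinh z
      ≤ 2 * (Real.exp z * Real.exp ((1 - β) ^ 2 * s / 4)) - Real.exp z := by
    rcases le_or_gt ((1 - β) * s / 2) 1 with hcase | hcase
    · -- small case: use sinh z ≤ z exp z
      have h1 : (1 - β) / β * Real.sinh z ≤ (1 - β) / β * (z * Real.exp z) := by
        apply mul_le_mul_of_nonneg_left (sinh_le_mul_exp hz)
        have : 0 ≤ 1 - β := by linarith
        positivity
      have h2 : (1 - β) / β * (z * Real.exp z) = ((1 - β) * s / 2) * Real.exp z := by
        rw [hzdef]; field_simp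
      have h3 : ((1 - β) * s / 2) * Real.exp z ≤ 1 * Real.exp z := by
        apply mul_le_mul_of_nonneg_right hcase hez.le
      nlinarith
    · rcases le_or_gt β (1/4) with hβ | hβ
      · -- β small: sinh z ≤ z exp z and e*x ≤ exp x
        have h1 : (1 - β) / β * Real.sinh z ≤ ((1 - β) * s / 2) * Real.exp z := by
          have h2 : (1 - β) / β * (z * Real.exp z) = ((1 - β) * s / 2) * Real.exp z := by
            rw [hzdef]; field_simp
          rw [← h2]
          apply mul_le_mul_of_nonneg_left (sinh_le_mul_exp hz)
          have : 0 ≤ 1 - β := by linarith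
          positivity
        have he : (2.7:ℝ) < Real.exp 1 := by
          have := Real.exp_one_gt_d9; norm_num at this ⊢; linarith
        have h4 : (1 - β) * s / 2 ≤ Real.exp 1 * ((1 - β) ^ 2 * s / 4) := by
          have hfac : 0 ≤ (1 - β) * s := by
            have : 0 ≤ 1 - β := by linarith
            positivity
          nlinarith [mul_nonneg hfac (show (0:ℝ) ≤ Real.exp 1 * (1 - β) - 2 by nlinarith)]
        have h5 : Real.exp 1 * ((1 - β) ^ 2 * s / 4)
            ≤ Real.exp ((1 - β) ^ 2 * s / 4) := mul_exp_one_le_exp _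
        have h6 : (1 - β) * s / 2 ≤ Real.exp ((1 - β) ^ 2 * s / 4) := le_trans h4 h5
        nlinarith
      · -- β ≥ 1/4 and (1-β)s/2 > 1 : use sinh z ≤ exp z / 2
        have h1 : (1 - β) / β * Real.sinh z ≤ (1 - β) / (2 * β) * Real.exp z := by
          have := sinh_le_exp_half z
          have hb' : 0 ≤ (1 - β) / β := by
            have : 0 ≤ 1 - β := by linarith
            positivity
          calc (1 - β) / β * Real.sinh z ≤ (1 - β) / β * (Real.exp z / 2) :=
                mul_le_mul_of_nonneg_left this hb'
            _ = (1 - β) / (2 * β) * Real.exp z := by ring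
        have h2 : (1 - β) / 2 ≤ (1 - β) ^ 2 * s / 4 := by nlinarith
        have h3 : 1 + (1 - β) / 2 ≤ Real.exp ((1 - β) ^ 2 * s / 4) := by
          have := Real.add_one_le_exp ((1 - β) ^ 2 * s / 4)
          linarith
        -- need: (1-β)/(2β) * exp z ≤ 2 exp z * expD - exp z, expD ≥ 1 + (1-β)/2
        -- i.e. (1-β)/(2β) + 1 ≤ 2 expD ; suffices (1+β)/(2β) ≤ 3 - β
        have h4 : (1 - β) / (2 * β) + 1 ≤ 3 - β := by
          rw [div_add' _ _ _ (by positivity), div_le_iff₀ (by positivity)]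
          nlinarith [(β - 1/4) * (1 - β)]
        have h5 : (3:ℝ) - β ≤ 2 * Real.exp ((1 - β) ^ 2 * s / 4) := by linarith
        have h6 : (1 - β) / (2 * β) + 1 ≤ 2 * Real.exp ((1 - β) ^ 2 * s / 4) :=
          le_trans h4 h5
        nlinarith [mul_le_mul_of_nonneg_right h6 hez.le]
  have hrw : (1 - β) / β * Real.sinh z = 1 / β * Real.sinh z - Real.sinh z := by
    field_simp
  linarith [hkey]

theorem stmt6 (b l t : ℝ) (hb : 0 < b) (hl : l ∈ Set.Ioo 0 (b ^ 2 / 4)) (ht : 0 ≤ t) :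
    Real.exp (-(b * t) / 2) *
        (Real.cosh (Real.sqrt (1 - 4 * l / b ^ 2) * (b * t) / 2) +
          (1 / Real.sqrt (1 - 4 * l / b ^ 2)) *
            Real.sinh (Real.sqrt (1 - 4 * l / b ^ 2) * (b * t) / 2)) ≤
      2 * Real.exp (-(l * t) / b) := by
  obtain ⟨hl0, hlu⟩ := hl
  have hb2 : (0:ℝ) < b ^ 2 := by positivity
  have hx0 : 0 < 1 - 4 * l / b ^ 2 := by
    rw [sub_pos, div_lt_one hb2]; linarith
  have hx1 : 1 - 4 * l / b ^ 2 < 1 := by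
    have : 0 < 4 * l / b ^ 2 := by positivity
    linarith
  set β := Real.sqrt (1 - 4 * l / b ^ 2) with hβdef
  have hβ0 : 0 < β := Real.sqrt_pos.mpr hx0
  have hβ1 : β < 1 := by
    have h := Real.sqrt_lt_sqrt hx0.le hx1
    simpa [hβdef] using h
  have hβsq : β ^ 2 = 1 - 4 * l / b ^ 2 := Real.sq_sqrt hx0.le
  have hs : 0 ≤ b * t := by positivity
  have hkey := key_ineq β (b * t) hβ0 hβ1 hs
  have hmain : Real.exp (-(b * t) / 2) *
      (Real.cosh (β * (b * t) / 2) + 1 / β * Real.sinh (β * (b * t) / 2))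
      ≤ Real.exp (-(b * t) / 2) * (2 * Real.exp ((1 + β ^ 2) * (b * t) / 4)) :=
    mul_le_mul_of_nonneg_left hkey (Real.exp_pos _).le
  have heq : Real.exp (-(b * t) / 2) * (2 * Real.exp ((1 + β ^ 2) * (b * t) / 4))
      = 2 * Real.exp (-(l * t) / b) := by
    rw [mul_comm (Real.exp _), mul_assoc, ← Real.exp_add]
    congr 1
    rw [hβsq]
    field_simp
    ring
  calc Real.exp (-(b * t) / 2) *
      (Real.cosh (β * (b * t) / 2) + 1 / β * Real.sinh (β * (b * t) / 2))
      ≤ Real.exp (-(b * t) / 2) * (2 * Real.exp ((1 + β ^ 2) * (b * t) / 4)) := hmain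
    _ = 2 * Real.exp (-(l * t) / b) := heq
end

section
/- Let b > 0 and λ ∈ (0, b²/4), and set β = sqrt(1 - 4λ/b²). Then for all t ≥ 0: (1/λ) * (1 - exp(-bt/2) * (cosh(β bt/2) + (1/β) sinh(β bt/2))) ≤ σ₀ * sqrt(2t/(bλ)), where σ₀ ∈ (0,1) is any constant satisfying 1 - exp(-z) ≤ σ₀ sqrt(z) for all z ≥ 0. -/
theorem stmt7 (b l t σ₀ : ℝ) (hb : 0 < b) (hl : l ∈ Set.Ioo 0 (b ^ 2 / 4)) (ht : 0 ≤ t)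
    (hσ : σ₀ ∈ Set.Ioo (0:ℝ) 1)
    (hσbound : ∀ z : ℝ, 0 ≤ z → 1 - Real.exp (-z) ≤ σ₀ * Real.sqrt z) :
    (1 / l) * (1 - Real.exp (-(b * t) / 2) *
        (Real.cosh (Real.sqrt (1 - 4 * l / b ^ 2) * (b * t) / 2) +
          (1 / Real.sqrt (1 - 4 * l / b ^ 2)) *
            Real.sinh (Real.sqrt (1 - 4 * l / b ^ 2) * (b * t) / 2))) ≤
      σ₀ * Real.sqrt (2 * t / (b * l)) := by
  obtain ⟨hl0, hl1⟩ := hl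
  obtain ⟨hσ0, hσ1⟩ := hσ
  have hb2 : (0:ℝ) < b ^ 2 := by positivity
  set β := Real.sqrt (1 - 4 * l / b ^ 2) with hβdef
  have h1 : 0 < 1 - 4 * l / b ^ 2 := by
    rw [sub_pos, div_lt_one hb2]; linarith
  have h2 : 1 - 4 * l / b ^ 2 < 1 := by
    have : 0 < 4 * l / b ^ 2 := by positivity
    linarith
  have hβ0 : 0 < β := Real.sqrt_pos.mpr h1
  have hβ1 : β < 1 := by
    calc β < Real.sqrt 1 := Real.sqrt_lt_sqrt h1.le h2
      _ = 1 := Real.sqrt_one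
  have hβsq : β ^ 2 = 1 - 4 * l / b ^ 2 := Real.sq_sqrt h1.le
  set x := β * (b * t) / 2 with hxdef
  have hx0 : 0 ≤ x := by positivity
  have hsinh : 0 ≤ Real.sinh x := Real.sinh_nonneg_iff.mpr hx0
  have hstep1 : Real.exp x ≤ Real.cosh x + (1 / β) * Real.sinh x := by
    rw [← Real.cosh_add_sinh x]
    have h1β : 1 ≤ 1 / β := by
      rw [le_div_iff₀ hβ0]; linarith
    nlinarith
  set z := (1 - β) * (b * t) / 2 with hzdef
  have hz0 : 0 ≤ z := by
    apply div_nonneg _ (by norm_num)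
    exact mul_nonneg (by linarith) (mul_nonneg hb.le ht)
  have hexp : Real.exp (-z) ≤ Real.exp (-(b * t) / 2) *
      (Real.cosh x + (1 / β) * Real.sinh x) := by
    have h := mul_le_mul_of_nonneg_left hstep1 (Real.exp_nonneg (-(b * t) / 2))
    calc Real.exp (-z) = Real.exp (-(b * t) / 2) * Real.exp x := by
          rw [← Real.exp_add]; congr 1; rw [hzdef, hxdef]; ring
      _ ≤ _ := h
  have hinner : 1 - Real.exp (-(b * t) / 2) *
      (Real.cosh x + (1 / β) * Real.sinh x) ≤ σ₀ * Real.sqrt z := by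
    have := hσbound z hz0
    linarith
  have h4l : 4 * l = b ^ 2 * (1 - β ^ 2) := by
    rw [hβsq]; field_simp; ring
  have hzle : z ≤ 2 * l * t / b := by
    rw [hzdef, div_le_div_iff₀ (by norm_num) hb]
    nlinarith [mul_nonneg (mul_nonneg (mul_nonneg hb2.le (by linarith : (0:ℝ) ≤ 1 - β)) hβ0.le) ht]
  have hsqrt : Real.sqrt z ≤ l * Real.sqrt (2 * t / (b * l)) := by
    have heq : l * Real.sqrt (2 * t / (b * l)) = Real.sqrt (2 * l * t / b) := by
      rw [← Real.sqrt_sq hl0.le, ← Real.sqrt_mul (sq_nonneg l)]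
      congr 1
      field_simp
      simp only [Real.sqrt_sq hl0.le]; ring
    rw [heq]
    exact Real.sqrt_le_sqrt hzle
  calc (1 / l) * (1 - Real.exp (-(b * t) / 2) *
        (Real.cosh x + (1 / β) * Real.sinh x))
      ≤ (1 / l) * (σ₀ * Real.sqrt z) :=
        mul_le_mul_of_nonneg_left hinner (by positivity)
    _ ≤ σ₀ * Real.sqrt (2 * t / (b * l)) := by
        rw [div_mul_eq_mul_div, one_mul, div_le_iff₀ hl0]
        nlinarith [Real.sqrt_nonneg (2 * t / (b * l))]
end

section
/- Let φ : (0,∞) → (0,∞) be monotonically increasing and suppose there exists a continuous, monotonically increasing G : (0,∞) → (0,∞) with φ(γα) ≤ G(γ) φ(α) for all γ > 0, α > 0. Then Φ[φ](σδ) ≤ Φ[G](σ) Φ[φ](δ) for all σ > 0, δ > 0, where Φ[χ](δ) = δ² / inf{α > 0 : α χ(α) ≥ δ²}. -/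
/-- `hhat φ α = sqrt (α * φ α)`. -/
noncomputable def hhat (φ : ℝ → ℝ) (α : ℝ) : ℝ := Real.sqrt (α * φ α)

/-- Generalized inverse `hhatInv φ δ = inf {α > 0 | hhat φ α ≥ δ}`. -/
noncomputable def hhatInv (φ : ℝ → ℝ) (δ : ℝ) : ℝ := sInf {α : ℝ | 0 < α ∧ δ ≤ hhat φ α}

/-- Noise-free to noisy transform `Φ[φ](δ) = δ² / hhatInv φ δ`. -/
noncomputable def Phi (φ : ℝ → ℝ) (δ : ℝ) : ℝ := δ ^ 2 / hhatInv φ δ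

lemma hhat_set_bddBelow (φ : ℝ → ℝ) (δ : ℝ) :
    BddBelow {α : ℝ | 0 < α ∧ δ ≤ hhat φ α} :=
  ⟨0, fun x hx => hx.1.le⟩

lemma hhat_set_nonempty (φ : ℝ → ℝ) (hφmono : MonotoneOn φ (Set.Ioi 0))
    (hφpos : ∀ α > 0, 0 < φ α) (δ : ℝ) (hδ : 0 < δ) :
    Set.Nonempty {α : ℝ | 0 < α ∧ δ ≤ hhat φ α} := by
  have h1 : (0:ℝ) < φ 1 := hφpos 1 one_pos
  set A : ℝ := max 1 (δ ^ 2 / φ 1) with hA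
  have hApos : (0:ℝ) < A := lt_of_lt_of_le one_pos (le_max_left _ _)
  refine ⟨A, hApos, ?_⟩
  have hφA : φ 1 ≤ φ A := hφmono (by norm_num) hApos (le_max_left _ _)
  have hkey : δ ^ 2 ≤ A * φ A := by
    calc δ ^ 2 = (δ ^ 2 / φ 1) * φ 1 := by field_simp
    _ ≤ A * φ A := by
        apply mul_le_mul (le_max_right _ _) hφA h1.le hApos.le
  have := Real.sqrt_le_sqrt hkey
  rwa [Real.sqrt_sq hδ.le] at this

lemma hhatInv_pos (φ : ℝ → ℝ) (hφmono : MonotoneOn φ (Set.Ioi 0))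
    (hφpos : ∀ α > 0, 0 < φ α) (δ : ℝ) (hδ : 0 < δ) :
    0 < hhatInv φ δ := by
  have h1 : (0:ℝ) < φ 1 := hφpos 1 one_pos
  set m : ℝ := min 1 (δ ^ 2 / (2 * φ 1)) with hm
  have hmpos : 0 < m := lt_min one_pos (by positivity)
  have hlb : ∀ x ∈ {α : ℝ | 0 < α ∧ δ ≤ hhat φ α}, m ≤ x := by
    rintro x ⟨hx, hδx⟩
    have hsq : δ ^ 2 ≤ x * φ x := by
      have h0 : 0 ≤ x * φ x := by
        have := hφpos x hx; positivity
      have h2 : δ ^ 2 ≤ Real.sqrt (x * φ x) ^ 2 :=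
        pow_le_pow_left₀ hδ.le hδx 2
      rwa [Real.sq_sqrt h0] at h2
    rcases le_or_gt 1 x with h | h
    · exact le_trans (min_le_left _ _) h
    · have hφx : φ x ≤ φ 1 := hφmono hx (by norm_num) h.le
      have hx' : δ ^ 2 ≤ x * φ 1 := le_trans hsq (by nlinarith)
      have : δ ^ 2 / φ 1 ≤ x := (div_le_iff₀ h1).mpr hx'
      refine le_trans (min_le_right _ _) (le_trans ?_ this)
      rw [div_le_div_iff₀ (by positivity) h1]
      nlinarith
  exact lt_of_lt_of_le hmpos
    (le_csInf (hhat_set_nonempty φ hφmono hφpos δ hδ) hlb)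

lemma hhat_submul (φ G : ℝ → ℝ) (hφpos : ∀ α > 0, 0 < φ α)
    (hsub : ∀ γ > 0, ∀ α > 0, φ (γ * α) ≤ G γ * φ α)
    (γ β : ℝ) (hγ : 0 < γ) (hβ : 0 < β) :
    hhat φ (γ * β) ≤ hhat G γ * hhat φ β := by
  unfold hhat
  rw [← Real.sqrt_mul (by nlinarith [hsub γ hγ β hβ, hφpos β hβ, hφpos (γ*β) (by positivity)] : 0 ≤ γ * G γ)]
  apply Real.sqrt_le_sqrt
  have h := mul_le_mul_of_nonneg_left (hsub γ hγ β hβ) (mul_pos hγ hβ).le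
  nlinarith [h]

theorem stmt14 (φ G : ℝ → ℝ)
    (hφmono : MonotoneOn φ (Set.Ioi 0)) (hφpos : ∀ α > 0, 0 < φ α)
    (hGcont : ContinuousOn G (Set.Ioi 0)) (hGmono : MonotoneOn G (Set.Ioi 0))
    (hGpos : ∀ γ > 0, 0 < G γ)
    (hsub : ∀ γ > 0, ∀ α > 0, φ (γ * α) ≤ G γ * φ α) :
    ∀ σ > 0, ∀ δ > 0, Phi φ (σ * δ) ≤ Phi G σ * Phi φ δ := by
  intro σ hσ δ hδ
  set a : ℝ := hhatInv φ δ with ha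
  set b : ℝ := hhatInv G σ with hb
  have hapos : 0 < a := hhatInv_pos φ hφmono hφpos δ hδ
  have hbpos : 0 < b := hhatInv_pos G hGmono hGpos σ hσ
  -- key claim: a * b ≤ hhatInv φ (σ * δ)
  have hkey : a * b ≤ hhatInv φ (σ * δ) := by
    apply le_csInf (hhat_set_nonempty φ hφmono hφpos _ (by positivity))
    rintro x ⟨hx, hδx⟩
    by_contra hcon
    push_neg at hcon
    -- x < a * b; choose γ ∈ (x/a, b)
    have hxa : x / a < b := by rw [div_lt_iff₀ hapos]; linarith
    set γ : ℝ := (x / a + b) / 2 with hγdef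
    have hγpos : 0 < γ := by positivity
    have hγlt : γ < b := by
      rw [hγdef]; linarith
    have hγgt : x / a < γ := by rw [hγdef]; linarith
    set β : ℝ := x / γ with hβdef
    have hβpos : 0 < β := by positivity
    have hβlt : β < a := by
      rw [hβdef, div_lt_iff₀ hγpos]
      rw [div_lt_iff₀ hapos] at hγgt
      linarith
    -- γ not in G's set, β not in φ's set
    have hGγ : hhat G γ < σ := by
      by_contra h
      push_neg at h
      have : b ≤ γ := csInf_le (hhat_set_bddBelow G σ) ⟨hγpos, h⟩
      linarith
    have hφβ : hhat φ β < δ := by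
      by_contra h
      push_neg at h
      have : a ≤ β := csInf_le (hhat_set_bddBelow φ δ) ⟨hβpos, h⟩
      linarith
    have hxe : x = γ * β := by
      rw [hβdef, mul_div_cancel₀ _ hγpos.ne']
    have := hhat_submul φ G hφpos hsub γ β hγpos hβpos
    rw [← hxe] at this
    have hlt : hhat G γ * hhat φ β < σ * δ :=
      mul_lt_mul'' hGγ hφβ (Real.sqrt_nonneg _) (Real.sqrt_nonneg _)
    linarith
  have hcpos : 0 < hhatInv φ (σ * δ) := lt_of_lt_of_le (by positivity) hkey
  unfold Phi
  rw [← ha, ← hb]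
  have h1 : (σ * δ) ^ 2 / hhatInv φ (σ * δ) ≤ (σ * δ) ^ 2 / (a * b) := by
    gcongr
  have h2 : (σ * δ) ^ 2 / (a * b) = σ ^ 2 / b * (δ ^ 2 / a) := by
    field_simp
  linarith
end
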